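/- Let V : [0,∞) → ℝ be a right-continuous function with left limits, of finite variation on every compact interval. Let t > 0 and let x be a simple level for V with x ≠ V(0) and x ≠ V(t). Then 1_{(−∞,x)}(V(t)) = 1_{(−∞,x)}(V(0)) − ℓ^x(t) + Σ_{0<s≤t} ( 1_{(−∞,x)}(V(s)) − 1_{(−∞,x)}(V(s−)) ), where the sum has only finitely many nonzero terms. -/

import Mathlib

open MeasureTheory Set Filter
open scoped ENNReal NNReal

noncomputable section

/-- `V` increases through the level `x` at time `t`: `t > 0`, `V t = x`, `V` is continuous
at `t` (within the domain `[0,∞)`), and `V s - V t` has the same sign as `s - t` for all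
`s ≥ 0` in some neighborhood of `t`. -/
def IncreasesThrough (V : ℝ → ℝ) (x t : ℝ) : Prop :=
  0 < t ∧ V t = x ∧ ContinuousWithinAt V (Set.Ici 0) t ∧
    ∃ ε > 0, ∀ s ∈ Set.Ici (0 : ℝ), |s - t| < ε →
      ((s < t → V s < V t) ∧ (t < s → V t < V s))

/-- `V` decreases through the level `x` at time `t` iff `-V` increases through `-x` at `t`. -/
def DecreasesThrough (V : ℝ → ℝ) (x t : ℝ) : Prop :=
  IncreasesThrough (fun s => -V s) (-x) t

/-- `(0,t] ∩ ℐ(x)`: the increasing passage times of `V` through `x` up to time `t`. -/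
def incSet (V : ℝ → ℝ) (x t : ℝ) : Set ℝ :=
  {s | s ∈ Set.Ioc 0 t ∧ IncreasesThrough V x s}

/-- `(0,t] ∩ 𝒟(x)`: the decreasing passage times of `V` through `x` up to time `t`. -/
def decSet (V : ℝ → ℝ) (x t : ℝ) : Set ℝ :=
  {s | s ∈ Set.Ioc 0 t ∧ DecreasesThrough V x s}

/-- The signed local time `ℓ^x(t) = Card((0,t] ∩ ℐ(x)) − Card((0,t] ∩ 𝒟(x))`
(meaningful when both sets are finite). -/
def signedLocalTime (V : ℝ → ℝ) (x t : ℝ) : ℤ :=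
  ((incSet V x t).ncard : ℤ) - ((decSet V x t).ncard : ℤ)

/-- The absolute local time `λ^x(t) = Card((0,t] ∩ ℐ(x)) + Card((0,t] ∩ 𝒟(x))`
(meaningful when both sets are finite). -/
def absLocalTime (V : ℝ → ℝ) (x t : ℝ) : ℕ :=
  (incSet V x t).ncard + (decSet V x t).ncard

/-- `x` is a *simple level* for `V` (with left limits `Vm`): the set
`{t > 0 : V(t−) < x < V(t) or V(t) < x < V(t−) or V(t) = x}` has no accumulation point in
`[0,∞)` (it is discrete), and no jump of `V` starts or ends at `x`. -/
def SimpleLevel (V Vm : ℝ → ℝ) (x : ℝ) : Prop :=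
  (∀ a : ℝ, 0 ≤ a →
      ¬ AccPt a (Filter.principal
        {u : ℝ | 0 < u ∧ ((Vm u < x ∧ x < V u) ∨ (V u < x ∧ x < Vm u) ∨ V u = x)})) ∧
  {u : ℝ | 0 < u ∧ V u ≠ Vm u ∧ (x = V u ∨ x = Vm u)} = ∅

/-! ### Auxiliary machinery for the proof -/

/-- The "level set" of times where `V` touches or jumps across `x`. -/
def lvl (V Vm : ℝ → ℝ) (x : ℝ) : Set ℝ :=
  {u : ℝ | 0 < u ∧ ((Vm u < x ∧ x < V u) ∨ (V u < x ∧ x < Vm u) ∨ V u = x)}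

lemma tan_fin {V Vm : ℝ → ℝ} {x : ℝ}
    (hx : ∀ a : ℝ, 0 ≤ a → ¬ AccPt a (Filter.principal (lvl V Vm x)))
    (T : ℝ) : (lvl V Vm x ∩ Set.Ioc 0 T).Finite := by
  by_contra h
  have hinf : (lvl V Vm x ∩ Set.Ioc 0 T).Infinite := h
  obtain ⟨a, haK, hacc⟩ := hinf.exists_accPt_of_subset_isCompact
    (isCompact_Icc (a := (0:ℝ)) (b := T))
    (fun s hs => ⟨le_of_lt hs.2.1, hs.2.2⟩)
  exact hx a haK.1 (hacc.mono (principal_mono.2 (Set.inter_subset_left)))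

lemma tan_nojump {V Vm : ℝ → ℝ} {x : ℝ}
    (hx2 : {u : ℝ | 0 < u ∧ V u ≠ Vm u ∧ (x = V u ∨ x = Vm u)} = ∅)
    {s : ℝ} (hs : 0 < s) : (V s = x → Vm s = x) ∧ (Vm s = x → V s = x) := by
  constructor <;> intro h
  · by_contra hne
    exact absurd (Set.eq_empty_iff_forall_notMem.mp hx2 s
      ⟨hs, fun he => hne (he ▸ h), Or.inl h.symm⟩) (fun c => c)
  · by_contra hne
    exact absurd (Set.eq_empty_iff_forall_notMem.mp hx2 s
      ⟨hs, fun he => hne (he ▸ h), Or.inr h.symm⟩) (fun c => c)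

lemma tan_offlvl' {V Vm : ℝ → ℝ} {x : ℝ}
    (hx2 : {u : ℝ | 0 < u ∧ V u ≠ Vm u ∧ (x = V u ∨ x = Vm u)} = ∅)
    {s : ℝ} (hs : 0 < s) (h : s ∉ lvl V Vm x) :
    (V s < x ↔ Vm s < x) ∧ V s ≠ x ∧ Vm s ≠ x := by
  have h' : ¬ ((Vm s < x ∧ x < V s) ∨ (V s < x ∧ x < Vm s) ∨ V s = x) := fun c => h ⟨hs, c⟩
  push_neg at h'
  obtain ⟨h1, h2, h3⟩ := h'
  have hVm : Vm s ≠ x := fun he => h3 ((tan_nojump hx2 hs).2 he)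
  refine ⟨?_, h3, hVm⟩
  constructor <;> intro hlt
  · rcases lt_trichotomy (Vm s) x with h | h | h
    · exact h
    · exact absurd h hVm
    · exact absurd (h2 hlt) (not_le.mpr h)
  · rcases lt_trichotomy (V s) x with h | h | h
    · exact h
    · exact absurd h h3
    · exact absurd (h1 hlt) (not_le.mpr h)

lemma tan_side_lt {V Vm : ℝ → ℝ} {x : ℝ}
    (hV_rc : ∀ s ∈ Set.Ici (0 : ℝ), ContinuousWithinAt V (Set.Ici s) s)
    (hV_ll : ∀ s ∈ Set.Ioi (0 : ℝ),
      Filter.Tendsto V (nhdsWithin s (Set.Iio s)) (nhds (Vm s)))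
    (hx2 : {u : ℝ | 0 < u ∧ V u ≠ Vm u ∧ (x = V u ∨ x = Vm u)} = ∅)
    {a b : ℝ} (ha : 0 ≤ a) (hab : a < b) (hS : Set.Ioo a b ∩ lvl V Vm x = ∅)
    (hVa : V a < x) : ∀ s ∈ Set.Ioo a b, V s < x := by
  intro s₀ hs₀
  by_contra hcon
  set N := {s ∈ Set.Ioo a b | x ≤ V s} with hN
  have hNne : N.Nonempty := ⟨s₀, hs₀, not_lt.mp hcon⟩
  have hNbdd : BddBelow N := ⟨a, fun n hn => hn.1.1.le⟩
  set c := sInf N with hcdef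
  have hcb : c < b := lt_of_le_of_lt (csInf_le hNbdd hNne.choose_spec) hNne.choose_spec.1.2
  have hev : ∀ᶠ s in nhdsWithin a (Set.Ici a), V s < x :=
    Filter.Tendsto.eventually_lt_const hVa (hV_rc a ha)
  obtain ⟨δ, hδ, hδs⟩ := Metric.mem_nhdsWithin_iff.mp hev
  have hac : a < c := by
    have : a + δ ≤ c := by
      apply le_csInf hNne
      intro n hn
      by_contra hlt
      push_neg at hlt
      have : V n < x := hδs ⟨by
        simp only [Metric.mem_ball, Real.dist_eq, abs_lt]
        constructor <;> [linarith [hn.1.1]; linarith], hn.1.1.le⟩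
      exact absurd hn.2 (not_le.mpr this)
    linarith
  have hc0 : 0 < c := lt_of_le_of_lt ha hac
  have hIoo : ∀ s ∈ Set.Ioo a c, V s < x := by
    intro s hs
    have hsN : s ∉ N := fun hmem => absurd (csInf_le hNbdd hmem) (not_le.mpr hs.2)
    have : s ∈ Set.Ioo a b := ⟨hs.1, lt_trans hs.2 hcb⟩
    by_contra hcc
    exact hsN ⟨this, not_lt.mp hcc⟩
  have hxVc : x ≤ V c := by
    by_contra h2
    push_neg at h2
    have hev2 : ∀ᶠ s in nhdsWithin c (Set.Ici c), V s < x :=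
      Filter.Tendsto.eventually_lt_const h2 (hV_rc c hc0.le)
    obtain ⟨δ₂, hδ₂, hδs₂⟩ := Metric.mem_nhdsWithin_iff.mp hev2
    obtain ⟨n, hnN, hnlt⟩ := (csInf_lt_iff hNbdd hNne).mp (show sInf N < c + δ₂ by
      rw [← hcdef]; linarith)
    have hcn : c ≤ n := csInf_le hNbdd hnN
    have : V n < x := hδs₂ ⟨by
      simp only [Metric.mem_ball, Real.dist_eq, abs_lt]
      constructor <;> linarith, hcn⟩
    exact absurd hnN.2 (not_le.mpr this)
  have hVmc : Vm c ≤ x := by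
    refine le_of_tendsto (hV_ll c hc0) ?_
    filter_upwards [Ioo_mem_nhdsLT hac] with s hs
    exact (hIoo s hs).le
  have hclvl : c ∈ lvl V Vm x := by
    rcases eq_or_lt_of_le hxVc with heq | hlt
    · exact ⟨hc0, Or.inr (Or.inr heq.symm)⟩
    · rcases eq_or_lt_of_le hVmc with heq2 | hlt2
      · exact absurd ((tan_nojump hx2 hc0).2 heq2) (ne_of_gt hlt)
      · exact ⟨hc0, Or.inl ⟨hlt2, hlt⟩⟩
  have hmem : c ∈ Set.Ioo a b ∩ lvl V Vm x := ⟨⟨hac, hcb⟩, hclvl⟩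
  rw [hS] at hmem
  exact hmem

lemma tan_side_gt {V Vm : ℝ → ℝ} {x : ℝ}
    (hV_rc : ∀ s ∈ Set.Ici (0 : ℝ), ContinuousWithinAt V (Set.Ici s) s)
    (hV_ll : ∀ s ∈ Set.Ioi (0 : ℝ),
      Filter.Tendsto V (nhdsWithin s (Set.Iio s)) (nhds (Vm s)))
    (hx2 : {u : ℝ | 0 < u ∧ V u ≠ Vm u ∧ (x = V u ∨ x = Vm u)} = ∅)
    {a b : ℝ} (ha : 0 ≤ a) (hab : a < b) (hS : Set.Ioo a b ∩ lvl V Vm x = ∅)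
    (hVa : x < V a) : ∀ s ∈ Set.Ioo a b, x < V s := by
  intro s₀ hs₀
  by_contra hcon
  set N := {s ∈ Set.Ioo a b | V s ≤ x} with hN
  have hNne : N.Nonempty := ⟨s₀, hs₀, not_lt.mp hcon⟩
  have hNbdd : BddBelow N := ⟨a, fun n hn => hn.1.1.le⟩
  set c := sInf N with hcdef
  have hcb : c < b := lt_of_le_of_lt (csInf_le hNbdd hNne.choose_spec) hNne.choose_spec.1.2
  have hev : ∀ᶠ s in nhdsWithin a (Set.Ici a), x < V s :=
    Filter.Tendsto.eventually_const_lt hVa (hV_rc a ha)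
  obtain ⟨δ, hδ, hδs⟩ := Metric.mem_nhdsWithin_iff.mp hev
  have hac : a < c := by
    have : a + δ ≤ c := by
      apply le_csInf hNne
      intro n hn
      by_contra hlt
      push_neg at hlt
      have : x < V n := hδs ⟨by
        simp only [Metric.mem_ball, Real.dist_eq, abs_lt]
        constructor <;> [linarith [hn.1.1]; linarith], hn.1.1.le⟩
      exact absurd hn.2 (not_le.mpr this)
    linarith
  have hc0 : 0 < c := lt_of_le_of_lt ha hac
  have hIoo : ∀ s ∈ Set.Ioo a c, x < V s := by
    intro s hs
    have hsN : s ∉ N := fun hmem => absurd (csInf_le hNbdd hmem) (not_le.mpr hs.2)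
    have : s ∈ Set.Ioo a b := ⟨hs.1, lt_trans hs.2 hcb⟩
    by_contra hcc
    exact hsN ⟨this, not_lt.mp hcc⟩
  have hxVc : V c ≤ x := by
    by_contra h2
    push_neg at h2
    have hev2 : ∀ᶠ s in nhdsWithin c (Set.Ici c), x < V s :=
      Filter.Tendsto.eventually_const_lt h2 (hV_rc c hc0.le)
    obtain ⟨δ₂, hδ₂, hδs₂⟩ := Metric.mem_nhdsWithin_iff.mp hev2
    obtain ⟨n, hnN, hnlt⟩ := (csInf_lt_iff hNbdd hNne).mp (show sInf N < c + δ₂ by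
      rw [← hcdef]; linarith)
    have hcn : c ≤ n := csInf_le hNbdd hnN
    have : x < V n := hδs₂ ⟨by
      simp only [Metric.mem_ball, Real.dist_eq, abs_lt]
      constructor <;> linarith, hcn⟩
    exact absurd hnN.2 (not_le.mpr this)
  have hVmc : x ≤ Vm c := by
    refine ge_of_tendsto (hV_ll c hc0) ?_
    filter_upwards [Ioo_mem_nhdsLT hac] with s hs
    exact (hIoo s hs).le
  have hclvl : c ∈ lvl V Vm x := by
    rcases eq_or_lt_of_le hxVc with heq | hlt
    · exact ⟨hc0, Or.inr (Or.inr heq)⟩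
    · rcases eq_or_lt_of_le hVmc with heq2 | hlt2
      · exact absurd ((tan_nojump hx2 hc0).2 heq2.symm) (ne_of_lt hlt)
      · exact ⟨hc0, Or.inr (Or.inl ⟨hlt, hlt2⟩)⟩
  have hmem : c ∈ Set.Ioo a b ∩ lvl V Vm x := ⟨⟨hac, hcb⟩, hclvl⟩
  rw [hS] at hmem
  exact hmem

lemma tan_side_iff {V Vm : ℝ → ℝ} {x : ℝ}
    (hV_rc : ∀ s ∈ Set.Ici (0 : ℝ), ContinuousWithinAt V (Set.Ici s) s)
    (hV_ll : ∀ s ∈ Set.Ioi (0 : ℝ),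
      Filter.Tendsto V (nhdsWithin s (Set.Iio s)) (nhds (Vm s)))
    (hx2 : {u : ℝ | 0 < u ∧ V u ≠ Vm u ∧ (x = V u ∨ x = Vm u)} = ∅)
    {a b : ℝ} (ha : 0 ≤ a) (hab : a < b) (hS : Set.Ioo a b ∩ lvl V Vm x = ∅)
    (hVa : V a ≠ x) : ∀ s ∈ Set.Ioo a b, (V s < x ↔ V a < x) ∧ V s ≠ x := by
  intro s hs
  have hslvl : s ∉ lvl V Vm x := fun hc => by
    have : s ∈ Set.Ioo a b ∩ lvl V Vm x := ⟨hs, hc⟩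
    rw [hS] at this; exact this
  have hs0 : 0 < s := lt_of_le_of_lt ha hs.1
  have hVs := (tan_offlvl' hx2 hs0 hslvl).2.1
  refine ⟨?_, hVs⟩
  rcases lt_trichotomy (V a) x with h | h | h
  · exact ⟨fun _ => h, fun _ => tan_side_lt hV_rc hV_ll hx2 ha hab hS h s hs⟩
  · exact absurd h hVa
  · have := tan_side_gt hV_rc hV_ll hx2 ha hab hS h s hs
    exact ⟨fun hc => absurd hc (not_lt.mpr this.le), fun hc => absurd hc (not_lt.mpr h.le)⟩

lemma tan_Vm_iff {V Vm : ℝ → ℝ} {x : ℝ}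
    (hV_rc : ∀ s ∈ Set.Ici (0 : ℝ), ContinuousWithinAt V (Set.Ici s) s)
    (hV_ll : ∀ s ∈ Set.Ioi (0 : ℝ),
      Filter.Tendsto V (nhdsWithin s (Set.Iio s)) (nhds (Vm s)))
    (hx2 : {u : ℝ | 0 < u ∧ V u ≠ Vm u ∧ (x = V u ∨ x = Vm u)} = ∅)
    {a b : ℝ} (ha : 0 ≤ a) (hab : a < b) (hS : Set.Ioo a b ∩ lvl V Vm x = ∅)
    (hVa : V a ≠ x) (hVmb : Vm b ≠ x) : Vm b < x ↔ V a < x := by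
  have hb0 : 0 < b := lt_of_le_of_lt ha hab
  rcases lt_trichotomy (V a) x with h | h | h
  · have hle : Vm b ≤ x := by
      refine le_of_tendsto (hV_ll b hb0) ?_
      filter_upwards [Ioo_mem_nhdsLT hab] with s hs
      exact (tan_side_lt hV_rc hV_ll hx2 ha hab hS h s hs).le
    exact ⟨fun _ => h, fun _ => lt_of_le_of_ne hle hVmb⟩
  · exact absurd h hVa
  · have hle : x ≤ Vm b := by
      refine ge_of_tendsto (hV_ll b hb0) ?_
      filter_upwards [Ioo_mem_nhdsLT hab] with s hs
      exact (tan_side_gt hV_rc hV_ll hx2 ha hab hS h s hs).le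
    have hxlt : x < Vm b := lt_of_le_of_ne hle (Ne.symm hVmb)
    exact ⟨fun hc => absurd hc (not_lt.mpr hxlt.le), fun hc => absurd hc (not_lt.mpr h.le)⟩

lemma tan_propagate {V Vm : ℝ → ℝ} {x : ℝ}
    (hV_rc : ∀ s ∈ Set.Ici (0 : ℝ), ContinuousWithinAt V (Set.Ici s) s)
    (hV_ll : ∀ s ∈ Set.Ioi (0 : ℝ),
      Filter.Tendsto V (nhdsWithin s (Set.Iio s)) (nhds (Vm s)))
    (hx2 : {u : ℝ | 0 < u ∧ V u ≠ Vm u ∧ (x = V u ∨ x = Vm u)} = ∅)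
    {a b : ℝ} (ha : 0 ≤ a) (hab : a < b) (hS : Set.Ioo a b ∩ lvl V Vm x = ∅)
    (hVa : V a ≠ x) (hb : b ∉ lvl V Vm x) :
    (V b < x ↔ V a < x) ∧ (Vm b < x ↔ V a < x) ∧ V b ≠ x ∧ Vm b ≠ x := by
  have hb0 : 0 < b := lt_of_le_of_lt ha hab
  obtain ⟨hiff, hVb, hVmb⟩ := tan_offlvl' hx2 hb0 hb
  have h2 := tan_Vm_iff hV_rc hV_ll hx2 ha hab hS hVa hVmb
  exact ⟨hiff.trans h2, h2, hVb, hVmb⟩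

lemma tan_gcongr {x y z : ℝ} (h : y < x ↔ z < x) :
    (Set.Iio x).indicator (fun _ => (1:ℝ)) y = (Set.Iio x).indicator (fun _ => (1:ℝ)) z := by
  by_cases hy : y < x
  · rw [Set.indicator_of_mem (Set.mem_Iio.mpr hy), Set.indicator_of_mem (Set.mem_Iio.mpr (h.mp hy))]
  · rw [Set.indicator_of_notMem (fun c => hy (Set.mem_Iio.mp c)),
      Set.indicator_of_notMem (fun c => (fun hz => hy (h.mpr hz)) (Set.mem_Iio.mp c))]

lemma tan_inc_sub {V Vm : ℝ → ℝ} {x t₀ : ℝ} :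
    incSet V x t₀ ⊆ lvl V Vm x ∩ Set.Ioc 0 t₀ :=
  fun s hs => ⟨⟨hs.1.1, Or.inr (Or.inr hs.2.2.1)⟩, hs.1⟩

lemma tan_dec_vx {V : ℝ → ℝ} {x s : ℝ} (h : DecreasesThrough V x s) : V s = x :=
  neg_injective h.2.1

lemma tan_dec_sub {V Vm : ℝ → ℝ} {x t₀ : ℝ} :
    decSet V x t₀ ⊆ lvl V Vm x ∩ Set.Ioc 0 t₀ :=
  fun s hs => ⟨⟨hs.1.1, Or.inr (Or.inr (tan_dec_vx hs.2))⟩, hs.1⟩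
lemma tan_induction {V Vm : ℝ → ℝ} {x : ℝ}
    (hV_rc : ∀ s ∈ Set.Ici (0 : ℝ), ContinuousWithinAt V (Set.Ici s) s)
    (hV_ll : ∀ s ∈ Set.Ioi (0 : ℝ),
      Filter.Tendsto V (nhdsWithin s (Set.Iio s)) (nhds (Vm s)))
    (hx : SimpleLevel V Vm x) (hx0 : V 0 ≠ x) :
    ∀ n : ℕ, ∀ t : ℝ, 0 < t → V t ≠ x → (lvl V Vm x ∩ Set.Ioc 0 t).ncard = n →
    (Set.Iio x).indicator (fun _ => (1:ℝ)) (V t)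
      = (Set.Iio x).indicator (fun _ => (1:ℝ)) (V 0) - (signedLocalTime V x t : ℝ)
        + ∑ᶠ s ∈ lvl V Vm x ∩ Set.Ioc 0 t,
            ((Set.Iio x).indicator (fun _ => (1:ℝ)) (V s)
              - (Set.Iio x).indicator (fun _ => (1:ℝ)) (Vm s)) := by
  have hx1 : ∀ a : ℝ, 0 ≤ a → ¬ AccPt a (Filter.principal (lvl V Vm x)) := hx.1
  have hx2 := hx.2
  intro n
  induction n with
  | zero =>
    intro t ht hVt hcard
    have hfin := tan_fin hx1 t
    have hempty : lvl V Vm x ∩ Set.Ioc 0 t = ∅ := (Set.ncard_eq_zero hfin).mp hcard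
    have hnotin : ∀ y, y ∈ Set.Ioc 0 t → y ∉ lvl V Vm x := by
      intro y hy hc
      have : y ∈ lvl V Vm x ∩ Set.Ioc 0 t := ⟨hc, hy⟩
      rw [hempty] at this; exact this
    have hSoo : Set.Ioo 0 t ∩ lvl V Vm x = ∅ := by
      ext y; simp only [Set.mem_inter_iff, Set.mem_empty_iff_false, iff_false, not_and]
      intro hy; exact hnotin y ⟨hy.1, hy.2.le⟩
    have hprop := tan_propagate hV_rc hV_ll hx2 le_rfl ht hSoo hx0
      (hnotin t ⟨ht, le_rfl⟩)
    have hincE : incSet V x t = ∅ := by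
      apply Set.eq_empty_of_subset_empty
      intro s hs
      rw [← hempty]; exact tan_inc_sub hs
    have hdecE : decSet V x t = ∅ := by
      apply Set.eq_empty_of_subset_empty
      intro s hs
      rw [← hempty]; exact tan_dec_sub hs
    have hslt : (signedLocalTime V x t : ℝ) = 0 := by
      simp [signedLocalTime, hincE, hdecE]
    rw [hempty, finsum_mem_empty, hslt, tan_gcongr hprop.1]
    ring
  | succ n IH =>
    intro t ht hVt hcard
    have hfin := tan_fin hx1 t
    set A := lvl V Vm x ∩ Set.Ioc 0 t with hAdef
    have hne : A.Nonempty := Set.nonempty_of_ncard_ne_zero (by rw [hcard]; exact Nat.succ_ne_zero n)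
    have hFne : hfin.toFinset.Nonempty := by rwa [Set.Finite.toFinset_nonempty]
    set u := hfin.toFinset.max' hFne with hudef
    have huA : u ∈ A := by
      have := hfin.toFinset.max'_mem hFne
      rwa [Set.Finite.mem_toFinset] at this
    have hmax : ∀ s ∈ A, s ≤ u := fun s hs =>
      hfin.toFinset.le_max' s (hfin.mem_toFinset.mpr hs)
    have hu0 : 0 < u := huA.2.1
    have hut : u ≤ t := huA.2.2
    -- find a gap to the left of u
    have hnacc := hx1 u hu0.le
    rw [accPt_iff_nhds] at hnacc
    push_neg at hnacc
    obtain ⟨U, hU, hUu⟩ := hnacc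
    obtain ⟨ε, hε, hball⟩ := Metric.mem_nhds_iff.mp hU
    set t' := max (u - ε/2) (u/2) with ht'def
    have ht'0 : 0 < t' := lt_of_lt_of_le (half_pos hu0) (le_max_right _ _)
    have ht'u : t' < u := max_lt (by linarith) (by linarith)
    have ht'near : u - t' < ε := by
      have : u - ε/2 ≤ t' := le_max_left _ _
      linarith
    have hnear : ∀ y ∈ lvl V Vm x, |y - u| < ε → y = u := by
      intro y hy hd
      exact hUu y ⟨hball (by simpa [Metric.mem_ball, Real.dist_eq] using hd), hy⟩
    have hlvlIoo : ∀ y ∈ Set.Ioo t' u, y ∉ lvl V Vm x := by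
      intro y hy hc
      have : |y - u| < ε := by rw [abs_lt]; constructor <;> [linarith [hy.1]; linarith [hy.2]]
      exact absurd (hnear y hc this) (ne_of_lt hy.2)
    have ht'lvl : t' ∉ lvl V Vm x := by
      intro hc
      have : |t' - u| < ε := by rw [abs_lt]; constructor <;> linarith
      exact absurd (hnear t' hc this) (ne_of_lt ht'u)
    have hVt' : V t' ≠ x := fun h => ht'lvl ⟨ht'0, Or.inr (Or.inr h)⟩
    have hSoo : Set.Ioo t' u ∩ lvl V Vm x = ∅ := by
      ext y; simp only [Set.mem_inter_iff, Set.mem_empty_iff_false, iff_false, not_and]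
      exact hlvlIoo y
    have hAone : lvl V Vm x ∩ Set.Ioc t' t = {u} := by
      ext y
      simp only [Set.mem_inter_iff, Set.mem_Ioc, Set.mem_singleton_iff]
      constructor
      · rintro ⟨hylvl, hyt', hyt⟩
        have hyu : y ≤ u := hmax y ⟨hylvl, lt_trans ht'0 hyt', hyt⟩
        rcases eq_or_lt_of_le hyu with h | h
        · exact h
        · exact absurd hylvl (hlvlIoo y ⟨hyt', h⟩)
      · rintro rfl
        exact ⟨huA.1, ht'u, hut⟩
    have hA' : lvl V Vm x ∩ Set.Ioc 0 t' = A \ {u} := by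
      ext y
      simp only [Set.mem_inter_iff, Set.mem_Ioc, hAdef, Set.mem_diff, Set.mem_singleton_iff]
      constructor
      · rintro ⟨hylvl, hy0, hyt'⟩
        exact ⟨⟨hylvl, hy0, le_trans hyt' (le_trans ht'u.le hut)⟩,
          fun h => absurd (h ▸ hyt') (not_le.mpr ht'u)⟩
      · rintro ⟨⟨hylvl, hy0, hyt⟩, hyne⟩
        refine ⟨hylvl, hy0, ?_⟩
        by_contra hgt
        push_neg at hgt
        have : y ∈ lvl V Vm x ∩ Set.Ioc t' t := ⟨hylvl, hgt, hyt⟩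
        rw [hAone] at this
        exact hyne this
    have hfin' := tan_fin hx1 t'
    have hufin' : u ∉ lvl V Vm x ∩ Set.Ioc 0 t' := by
      rw [hA']; exact fun h => h.2 rfl
    have hcard' : (lvl V Vm x ∩ Set.Ioc 0 t').ncard = n := by
      rw [hA', Set.ncard_diff_singleton_of_mem huA, hcard]
      omega
    have hIH := IH t' ht'0 hVt' hcard'
    have hAins : A = insert u (lvl V Vm x ∩ Set.Ioc 0 t') := by
      rw [hA', Set.insert_diff_singleton, Set.insert_eq_self.mpr huA]
    have hsplit : ∑ᶠ s ∈ A, ((Set.Iio x).indicator (fun _ => (1:ℝ)) (V s)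
          - (Set.Iio x).indicator (fun _ => (1:ℝ)) (Vm s))
        = ((Set.Iio x).indicator (fun _ => (1:ℝ)) (V u)
          - (Set.Iio x).indicator (fun _ => (1:ℝ)) (Vm u))
          + ∑ᶠ s ∈ lvl V Vm x ∩ Set.Ioc 0 t', ((Set.Iio x).indicator (fun _ => (1:ℝ)) (V s)
          - (Set.Iio x).indicator (fun _ => (1:ℝ)) (Vm s)) := by
      rw [hAins]
      exact finsum_mem_insert _ hufin' hfin'
    have hfininc' : (incSet V x t').Finite := hfin'.subset tan_inc_sub
    have hfindec' : (decSet V x t').Finite := hfin'.subset tan_dec_sub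
    have hVmiffAux : Vm u ≠ x → (Vm u < x ↔ V t' < x) :=
      fun hVmu => tan_Vm_iff hV_rc hV_ll hx2 ht'0.le ht'u hSoo hVt' hVmu
    -- sub/sup relations for inc/dec sets
    have hinc_sub2 : ∀ s ∈ incSet V x t, s = u ∨ s ∈ incSet V x t' := by
      intro s hs
      by_cases hst' : s ≤ t'
      · exact Or.inr ⟨⟨hs.1.1, hst'⟩, hs.2⟩
      · left
        push_neg at hst'
        have : s ∈ lvl V Vm x ∩ Set.Ioc t' t :=
          ⟨⟨hs.1.1, Or.inr (Or.inr hs.2.2.1)⟩, hst', hs.1.2⟩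
        rwa [hAone] at this
    have hdec_sub2 : ∀ s ∈ decSet V x t, s = u ∨ s ∈ decSet V x t' := by
      intro s hs
      by_cases hst' : s ≤ t'
      · exact Or.inr ⟨⟨hs.1.1, hst'⟩, hs.2⟩
      · left
        push_neg at hst'
        have : s ∈ lvl V Vm x ∩ Set.Ioc t' t :=
          ⟨⟨hs.1.1, Or.inr (Or.inr (tan_dec_vx hs.2))⟩, hst', hs.1.2⟩
        rwa [hAone] at this
    have hinc_sup : incSet V x t' ⊆ incSet V x t :=
      fun s hs => ⟨⟨hs.1.1, le_trans hs.1.2 (le_trans ht'u.le hut)⟩, hs.2⟩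
    have hdec_sup : decSet V x t' ⊆ decSet V x t :=
      fun s hs => ⟨⟨hs.1.1, le_trans hs.1.2 (le_trans ht'u.le hut)⟩, hs.2⟩
    have huninc' : u ∉ incSet V x t' := fun h => absurd h.1.2 (not_le.mpr ht'u)
    have hundec' : u ∉ decSet V x t' := fun h => absurd h.1.2 (not_le.mpr ht'u)
    by_cases hVu : V u = x
    · -- Case B : continuous crossing or touch at u
      have hVmu : Vm u = x := (tan_nojump hx2 hu0).1 hVu
      have hult : u < t := lt_of_le_of_ne hut (fun h => hVt (h ▸ hVu))
      have htlvl : t ∉ lvl V Vm x := fun hc =>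
        absurd (hmax t ⟨hc, ht, le_rfl⟩) (not_le.mpr hult)
      have hIoout : ∀ y ∈ Set.Ioo u t, y ∉ lvl V Vm x := by
        intro y hy hc
        exact absurd (hmax y ⟨hc, lt_trans hu0 hy.1, hy.2.le⟩) (not_le.mpr hy.1)
      have hleft : ∀ s ∈ Set.Ioo t' u, (V s < x ↔ V t' < x) ∧ V s ≠ x := by
        intro s hs
        have hSoo' : Set.Ioo t' u ∩ lvl V Vm x = ∅ := hSoo
        exact tan_side_iff hV_rc hV_ll hx2 ht'0.le ht'u hSoo' hVt' s hs
      have hright : ∀ s ∈ Set.Ioc u t, (V s < x ↔ V t < x) ∧ V s ≠ x := by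
        intro s hs
        rcases eq_or_lt_of_le hs.2 with rfl | hst
        · exact ⟨Iff.rfl, hVt⟩
        · have hslvl : s ∉ lvl V Vm x := hIoout s ⟨hs.1, hst⟩
          have hs0 : 0 < s := lt_trans hu0 hs.1
          have hVs : V s ≠ x := (tan_offlvl' hx2 hs0 hslvl).2.1
          have hSst : Set.Ioo s t ∩ lvl V Vm x = ∅ := by
            ext y; simp only [Set.mem_inter_iff, Set.mem_empty_iff_false, iff_false, not_and]
            intro hy
            exact hIoout y ⟨lt_trans hs.1 hy.1, hy.2⟩
          have := tan_propagate hV_rc hV_ll hx2 hs0.le hst hSst hVs htlvl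
          exact ⟨this.1.symm, hVs⟩
      -- continuity of V at u
      have hcont : ContinuousWithinAt V (Set.Ici 0) u := by
        apply ContinuousAt.continuousWithinAt
        have : Filter.Tendsto V (nhds u) (nhds (V u)) := by
          rw [← nhdsLT_sup_nhdsGE u, Filter.tendsto_sup]
          constructor
          · have := hV_ll u hu0
            rw [hVmu, ← hVu] at this
            exact this
          · exact hV_rc u hu0.le
        exact this
      -- characterization of increase / decrease at u
      have hinciff : IncreasesThrough V x u ↔ (V t' < x ∧ ¬ V t < x) := by
        constructor
        · rintro ⟨-, hVux, -, ε', hε', hloc⟩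
          constructor
          · set s₁ := max t' (u - ε'/2) with hs₁def
            have hs₁t' : t' ≤ s₁ := le_max_left _ _
            have hs₁u : s₁ < u := max_lt ht'u (by linarith)
            have hs₁near : |s₁ - u| < ε' := by
              rw [abs_lt]
              constructor
              · have : u - ε'/2 ≤ s₁ := le_max_right _ _
                linarith
              · linarith
            have hVs₁ : V s₁ < x := by
              have := (hloc s₁ (le_trans ht'0.le hs₁t') hs₁near).1 hs₁u
              rwa [hVux] at this
            rcases eq_or_lt_of_le hs₁t' with h | h
            · rwa [h]
            · exact (hleft s₁ ⟨h, hs₁u⟩).1.mp hVs₁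
          · set s₂ := min t (u + ε'/2) with hs₂def
            have hs₂t : s₂ ≤ t := min_le_left _ _
            have hus₂ : u < s₂ := lt_min hult (by linarith)
            have hs₂near : |s₂ - u| < ε' := by
              rw [abs_lt]
              constructor
              · linarith
              · have : s₂ ≤ u + ε'/2 := min_le_right _ _
                linarith
            have hVs₂ : x < V s₂ := by
              have := (hloc s₂ (le_trans hu0.le hus₂.le) hs₂near).2 hus₂
              rwa [hVux] at this
            intro hc
            exact absurd ((hright s₂ ⟨hus₂, hs₂t⟩).1.mpr hc) (not_lt.mpr hVs₂.le)
        · rintro ⟨hσm, hσp⟩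
          refine ⟨hu0, hVu, hcont, min (u - t') (t - u),
            lt_min (by linarith) (by linarith), ?_⟩
          intro s hs0 habs
          rw [abs_lt] at habs
          have hb1 : -(min (u - t') (t - u)) < s - u := habs.1
          have hb2 : s - u < min (u - t') (t - u) := habs.2
          have hmin1 : min (u - t') (t - u) ≤ u - t' := min_le_left _ _
          have hmin2 : min (u - t') (t - u) ≤ t - u := min_le_right _ _
          constructor
          · intro hsu
            have hss : s ∈ Set.Ioo t' u := ⟨by linarith, hsu⟩
            rw [hVu]
            exact (hleft s hss).1.mpr hσm
          · intro hus
            have hss : s ∈ Set.Ioc u t := ⟨hus, by linarith⟩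
            rw [hVu]
            have h1 : ¬ V s < x := fun c => hσp ((hright s hss).1.mp c)
            exact lt_of_le_of_ne (not_lt.mp h1) (Ne.symm (hright s hss).2)
      have hdeciff : DecreasesThrough V x u ↔ (¬ V t' < x ∧ V t < x) := by
        constructor
        · rintro ⟨-, hVux, -, ε', hε', hloc⟩
          have hVux' : V u = x := neg_injective hVux
          constructor
          · set s₁ := max t' (u - ε'/2) with hs₁def
            have hs₁t' : t' ≤ s₁ := le_max_left _ _
            have hs₁u : s₁ < u := max_lt ht'u (by linarith)
            have hs₁near : |s₁ - u| < ε' := by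
              rw [abs_lt]
              constructor
              · have : u - ε'/2 ≤ s₁ := le_max_right _ _
                linarith
              · linarith
            have hVs₁ : x < V s₁ := by
              have := (hloc s₁ (le_trans ht'0.le hs₁t') hs₁near).1 hs₁u
              simp only [neg_lt_neg_iff] at this
              rwa [hVux'] at this
            rcases eq_or_lt_of_le hs₁t' with h | h
            · rw [h]; exact not_lt.mpr hVs₁.le
            · exact fun c => absurd ((hleft s₁ ⟨h, hs₁u⟩).1.mpr c) (not_lt.mpr hVs₁.le)
          · set s₂ := min t (u + ε'/2) with hs₂def
            have hs₂t : s₂ ≤ t := min_le_left _ _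
            have hus₂ : u < s₂ := lt_min hult (by linarith)
            have hs₂near : |s₂ - u| < ε' := by
              rw [abs_lt]
              constructor
              · linarith
              · have : s₂ ≤ u + ε'/2 := min_le_right _ _
                linarith
            have hVs₂ : V s₂ < x := by
              have := (hloc s₂ (le_trans hu0.le hus₂.le) hs₂near).2 hus₂
              simp only [neg_lt_neg_iff] at this
              rwa [hVux'] at this
            exact (hright s₂ ⟨hus₂, hs₂t⟩).1.mp hVs₂
        · rintro ⟨hσm, hσp⟩
          refine ⟨hu0, by simp [hVu], hcont.neg, min (u - t') (t - u),
            lt_min (by linarith) (by linarith), ?_⟩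
          intro s hs0 habs
          rw [abs_lt] at habs
          have hb1 : -(min (u - t') (t - u)) < s - u := habs.1
          have hb2 : s - u < min (u - t') (t - u) := habs.2
          have hmin1 : min (u - t') (t - u) ≤ u - t' := min_le_left _ _
          have hmin2 : min (u - t') (t - u) ≤ t - u := min_le_right _ _
          constructor
          · intro hsu
            have hss : s ∈ Set.Ioo t' u := ⟨by linarith, hsu⟩
            simp only [neg_lt_neg_iff]
            rw [hVu]
            have h1 : ¬ V s < x := fun c => hσm ((hleft s hss).1.mp c)
            exact lt_of_le_of_ne (not_lt.mp h1) (Ne.symm (hleft s hss).2)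
          · intro hus
            have hss : s ∈ Set.Ioc u t := ⟨hus, by linarith⟩
            simp only [neg_lt_neg_iff]
            rw [hVu]
            exact (hright s hss).1.mpr hσp
      -- indicator values at u
      have hgu : (Set.Iio x).indicator (fun _ => (1:ℝ)) (V u) = 0 :=
        Set.indicator_of_notMem (by rw [hVu]; exact fun c => lt_irrefl x (Set.mem_Iio.mp c)) _
      have hgmu : (Set.Iio x).indicator (fun _ => (1:ℝ)) (Vm u) = 0 :=
        Set.indicator_of_notMem (by rw [hVmu]; exact fun c => lt_irrefl x (Set.mem_Iio.mp c)) _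
      -- now the four cases
      by_cases hσm : V t' < x <;> by_cases hσp : V t < x
      · -- below before, below after: neither inc nor dec
        have hninc : ¬ IncreasesThrough V x u := fun h => (hinciff.mp h).2 hσp
        have hndec : ¬ DecreasesThrough V x u := fun h => (hdeciff.mp h).1 hσm
        have hie : incSet V x t = incSet V x t' := by
          apply Set.Subset.antisymm _ hinc_sup
          intro s hs
          rcases hinc_sub2 s hs with rfl | h
          · exact absurd hs.2 hninc
          · exact h
        have hde : decSet V x t = decSet V x t' := by
          apply Set.Subset.antisymm _ hdec_sup
          intro s hs
          rcases hdec_sub2 s hs with rfl | h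
          · exact absurd hs.2 hndec
          · exact h
        have hslt : signedLocalTime V x t = signedLocalTime V x t' := by
          simp [signedLocalTime, hie, hde]
        rw [Set.indicator_of_mem (Set.mem_Iio.mpr hσp), hslt, hsplit, hgu, hgmu]
        rw [Set.indicator_of_mem (Set.mem_Iio.mpr hσm)] at hIH
        linarith [hIH]
      · -- below before, above after: increase through
        have hinc : IncreasesThrough V x u := hinciff.mpr ⟨hσm, hσp⟩
        have hndec : ¬ DecreasesThrough V x u := fun h => (hdeciff.mp h).1 hσm
        have hie : incSet V x t = insert u (incSet V x t') := by
          apply Set.Subset.antisymm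
          · intro s hs
            rcases hinc_sub2 s hs with rfl | h
            · exact Set.mem_insert _ _
            · exact Set.mem_insert_of_mem _ h
          · intro s hs
            rcases Set.mem_insert_iff.mp hs with rfl | h
            · exact ⟨⟨hu0, hut⟩, hinc⟩
            · exact hinc_sup h
        have hde : decSet V x t = decSet V x t' := by
          apply Set.Subset.antisymm _ hdec_sup
          intro s hs
          rcases hdec_sub2 s hs with rfl | h
          · exact absurd hs.2 hndec
          · exact h
        have hslt : (signedLocalTime V x t : ℝ) = (signedLocalTime V x t' : ℝ) + 1 := by
          simp only [signedLocalTime, hie, hde,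
            Set.ncard_insert_of_notMem huninc' hfininc']
          push_cast
          ring
        rw [Set.indicator_of_notMem (fun c => hσp (Set.mem_Iio.mp c)), hslt, hsplit, hgu, hgmu]
        rw [Set.indicator_of_mem (Set.mem_Iio.mpr hσm)] at hIH
        linarith [hIH]
      · -- above before, below after: decrease through
        have hninc' : ¬ IncreasesThrough V x u := fun h => hσm (hinciff.mp h).1
        have hdec : DecreasesThrough V x u := hdeciff.mpr ⟨hσm, hσp⟩
        have hie : incSet V x t = incSet V x t' := by
          apply Set.Subset.antisymm _ hinc_sup
          intro s hs
          rcases hinc_sub2 s hs with rfl | h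
          · exact absurd hs.2 hninc'
          · exact h
        have hde : decSet V x t = insert u (decSet V x t') := by
          apply Set.Subset.antisymm
          · intro s hs
            rcases hdec_sub2 s hs with rfl | h
            · exact Set.mem_insert _ _
            · exact Set.mem_insert_of_mem _ h
          · intro s hs
            rcases Set.mem_insert_iff.mp hs with rfl | h
            · exact ⟨⟨hu0, hut⟩, hdec⟩
            · exact hdec_sup h
        have hslt : (signedLocalTime V x t : ℝ) = (signedLocalTime V x t' : ℝ) - 1 := by
          simp only [signedLocalTime, hie, hde,
            Set.ncard_insert_of_notMem hundec' hfindec']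
          push_cast
          ring
        rw [Set.indicator_of_mem (Set.mem_Iio.mpr hσp), hslt, hsplit, hgu, hgmu]
        rw [Set.indicator_of_notMem (fun c => hσm (Set.mem_Iio.mp c))] at hIH
        linarith [hIH]
      · -- above before, above after
        have hninc : ¬ IncreasesThrough V x u := fun h => hσm (hinciff.mp h).1
        have hndec : ¬ DecreasesThrough V x u := fun h => hσp (hdeciff.mp h).2
        have hie : incSet V x t = incSet V x t' := by
          apply Set.Subset.antisymm _ hinc_sup
          intro s hs
          rcases hinc_sub2 s hs with rfl | h
          · exact absurd hs.2 hninc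
          · exact h
        have hde : decSet V x t = decSet V x t' := by
          apply Set.Subset.antisymm _ hdec_sup
          intro s hs
          rcases hdec_sub2 s hs with rfl | h
          · exact absurd hs.2 hndec
          · exact h
        have hslt : signedLocalTime V x t = signedLocalTime V x t' := by
          simp [signedLocalTime, hie, hde]
        rw [Set.indicator_of_notMem (fun c => hσp (Set.mem_Iio.mp c)), hslt, hsplit, hgu, hgmu]
        rw [Set.indicator_of_notMem (fun c => hσm (Set.mem_Iio.mp c))] at hIH
        linarith [hIH]
    · -- Case A : jump across x at u
      have hVmu : Vm u ≠ x := fun h => hVu ((tan_nojump hx2 hu0).2 h)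
      have hVmiff : Vm u < x ↔ V t' < x := hVmiffAux hVmu
      have hninc : ¬ IncreasesThrough V x u := fun h => hVu h.2.1
      have hndec : ¬ DecreasesThrough V x u := fun h => hVu (tan_dec_vx h)
      have hie : incSet V x t = incSet V x t' := by
        apply Set.Subset.antisymm _ hinc_sup
        intro s hs
        rcases hinc_sub2 s hs with rfl | h
        · exact absurd hs.2 hninc
        · exact h
      have hde : decSet V x t = decSet V x t' := by
        apply Set.Subset.antisymm _ hdec_sup
        intro s hs
        rcases hdec_sub2 s hs with rfl | h
        · exact absurd hs.2 hndec
        · exact h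
      have hslt : signedLocalTime V x t = signedLocalTime V x t' := by
        simp [signedLocalTime, hie, hde]
      have hgVt : (Set.Iio x).indicator (fun _ => (1:ℝ)) (V t)
          = (Set.Iio x).indicator (fun _ => (1:ℝ)) (V u) := by
        rcases eq_or_lt_of_le hut with h | hult
        · rw [h]
        · have htlvl : t ∉ lvl V Vm x := fun hc =>
            absurd (hmax t ⟨hc, ht, le_rfl⟩) (not_le.mpr hult)
          have hIoout : Set.Ioo u t ∩ lvl V Vm x = ∅ := by
            ext y; simp only [Set.mem_inter_iff, Set.mem_empty_iff_false, iff_false, not_and]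
            intro hy hc
            exact absurd (hmax y ⟨hc, lt_trans hu0 hy.1, hy.2.le⟩) (not_le.mpr hy.1)
          exact tan_gcongr (tan_propagate hV_rc hV_ll hx2 hu0.le hult hIoout hVu htlvl).1
      have hgVmu : (Set.Iio x).indicator (fun _ => (1:ℝ)) (Vm u)
          = (Set.Iio x).indicator (fun _ => (1:ℝ)) (V t') := tan_gcongr hVmiff
      rw [hgVt, hslt, hsplit, hgVmu]
      linarith [hIH]

/-- Meyer–Tanaka formula, lower-indicator version. Let `V` be càdlàg on
`[0,∞)` with finite variation on compacts, `t > 0`, and let `x` be a simple level for `V`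
with `x ≠ V 0` and `x ≠ V t`. Then
`1_{(−∞,x)}(V t) = 1_{(−∞,x)}(V 0) − ℓ^x(t) + Σ_{0<s≤t} (1_{(−∞,x)}(V s) − 1_{(−∞,x)}(V s−))`,
the sum having only finitely many nonzero terms. -/
theorem tanaka_formula_Iio
    (V Vm : ℝ → ℝ)
    (hV_rc : ∀ s ∈ Set.Ici (0 : ℝ), ContinuousWithinAt V (Set.Ici s) s)
    (hV_ll : ∀ s ∈ Set.Ioi (0 : ℝ),
      Filter.Tendsto V (nhdsWithin s (Set.Iio s)) (nhds (Vm s)))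
    (hV_bv : ∀ T : ℝ, BoundedVariationOn V (Set.Icc 0 T))
    (t : ℝ) (ht : 0 < t)
    (x : ℝ) (hx : SimpleLevel V Vm x) (hx0 : x ≠ V 0) (hxt : x ≠ V t) :
    {s : ℝ | s ∈ Set.Ioc (0 : ℝ) t ∧
        (Set.Iio x).indicator (fun _ => (1 : ℝ)) (V s) ≠
          (Set.Iio x).indicator (fun _ => (1 : ℝ)) (Vm s)}.Finite ∧
      (Set.Iio x).indicator (fun _ => (1 : ℝ)) (V t) =
        (Set.Iio x).indicator (fun _ => (1 : ℝ)) (V 0) - (signedLocalTime V x t : ℝ) +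
          ∑' s : Set.Ioc (0 : ℝ) t,
            ((Set.Iio x).indicator (fun _ => (1 : ℝ)) (V s.1) -
              (Set.Iio x).indicator (fun _ => (1 : ℝ)) (Vm s.1)) := by
  have hx1 : ∀ a : ℝ, 0 ≤ a → ¬ AccPt a (Filter.principal (lvl V Vm x)) := hx.1
  have hx2 := hx.2
  have hfin := tan_fin hx1 t
  -- off the level set the summand vanishes
  have hzero : ∀ s ∈ Set.Ioc (0:ℝ) t, s ∉ lvl V Vm x →
      (Set.Iio x).indicator (fun _ => (1 : ℝ)) (V s)
        = (Set.Iio x).indicator (fun _ => (1 : ℝ)) (Vm s) := by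
    intro s hs hslvl
    exact tan_gcongr (tan_offlvl' hx2 hs.1 hslvl).1
  constructor
  · apply hfin.subset
    intro s hs
    by_contra hc
    have hslvl : s ∉ lvl V Vm x := fun h => hc ⟨h, hs.1⟩
    exact hs.2 (hzero s hs.1 hslvl)
  · have hmain := tan_induction hV_rc hV_ll hx (Ne.symm hx0)
      (lvl V Vm x ∩ Set.Ioc 0 t).ncard t ht (Ne.symm hxt) rfl
    have htsum : (∑' s : Set.Ioc (0 : ℝ) t,
            ((Set.Iio x).indicator (fun _ => (1 : ℝ)) (V s.1) -
              (Set.Iio x).indicator (fun _ => (1 : ℝ)) (Vm s.1)))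
        = ∑ᶠ s ∈ lvl V Vm x ∩ Set.Ioc 0 t,
            ((Set.Iio x).indicator (fun _ => (1:ℝ)) (V s)
              - (Set.Iio x).indicator (fun _ => (1:ℝ)) (Vm s)) := by
      rw [tsum_subtype (Set.Ioc (0:ℝ) t)
        (fun s => (Set.Iio x).indicator (fun _ => (1 : ℝ)) (V s)
          - (Set.Iio x).indicator (fun _ => (1 : ℝ)) (Vm s))]
      rw [finsum_mem_eq_finite_toFinset_sum _ hfin]
      rw [tsum_eq_sum (s := hfin.toFinset) ?_]
      · apply Finset.sum_congr rfl
        intro b hb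
        rw [Set.Finite.mem_toFinset] at hb
        exact Set.indicator_of_mem hb.2 _
      · intro b hb
        rw [Set.Finite.mem_toFinset] at hb
        by_cases hIoc : b ∈ Set.Ioc (0:ℝ) t
        · have hblvl : b ∉ lvl V Vm x := fun c => hb ⟨c, hIoc⟩
          rw [Set.indicator_of_mem hIoc]
          rw [hzero b hIoc hblvl]
          ring
        · exact Set.indicator_of_notMem hIoc _
    rw [htsum]
    exact hmain
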